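/- Let A be a nonzero finite-dimensional n-Lie superalgebra and V a maximal subalgebra of A that is not an ideal of A. Then the invariance number of A is strictly greater than the invariance number of V: v(A) > v(V). -/

import Mathlib

/-- The sign `(-1)^t` for a parity `t ∈ ℤ/2`, as an element of the field `F`. -/
def superSgn (F : Type*) [Field F] (t : ZMod 2) : F := if t = 0 then 1 else -1

/-- An `n`-Lie superalgebra of parity `α` over a field `F`: a `ℤ/2`-graded vector space `A`
with an `n`-linear bracket which is homogeneous of degree `α`, skew-supersymmetric, and
satisfies the super Filippov–Jacobi identity (every left multiplication operator is a
superderivation). -/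
structure NLieSuper (F : Type*) (A : Type*) [Field F] [AddCommGroup A] [Module F A]
    (n : ℕ) (α : ZMod 2) where
  bracket : MultilinearMap F (fun _ : Fin n => A) A
  grading : ZMod 2 → Submodule F A
  internal : DirectSum.IsInternal grading
  bracket_grade : ∀ (x : Fin n → A) (g : Fin n → ZMod 2),
    (∀ i, x i ∈ grading (g i)) → bracket x ∈ grading (α + ∑ i, g i)
  skew : ∀ (x : Fin n → A) (g : Fin n → ZMod 2), (∀ i, x i ∈ grading (g i)) →
    ∀ i j : Fin n, (i : ℕ) + 1 = (j : ℕ) →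
      bracket (x ∘ Equiv.swap i j) = - (superSgn F (g i * g j)) • bracket x
  jacobi : ∀ (a : Fin n → A) (ga : Fin n → ZMod 2), (∀ l, a l ∈ grading (ga l)) →
    ∀ (b : Fin n → A) (gb : Fin n → ZMod 2), (∀ l, b l ∈ grading (gb l)) →
    ∀ i : Fin n,
      bracket (Function.update a i (bracket b)) =
      ∑ j : Fin n,
        (superSgn F ((∑ l ∈ Finset.univ.erase i, ga l) *
            (α + ∑ l ∈ Finset.univ.filter (fun l => l < j), gb l))) •
          bracket (Function.update b j (bracket (Function.update a i (b j))))

namespace NLieSuper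

variable {F A : Type*} [Field F] [AddCommGroup A] [Module F A] {n : ℕ} {α : ZMod 2}

/-- A graded subspace (`vector superspace`): `S = (S ⊓ A₀) ⊕ (S ⊓ A₁)`. -/
def IsGraded (L : NLieSuper F A n α) (S : Submodule F A) : Prop :=
  S ≤ (S ⊓ L.grading 0) ⊔ (S ⊓ L.grading 1)

/-- A subalgebra: a graded subspace closed under the bracket. -/
def IsSubalgebra (L : NLieSuper F A n α) (S : Submodule F A) : Prop :=
  L.IsGraded S ∧ ∀ x : Fin n → A, (∀ i, x i ∈ S) → L.bracket x ∈ S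

/-- An ideal: a graded subspace `I` with `[A,…,A,I] ⊆ I`. -/
def IsIdeal (L : NLieSuper F A n α) (S : Submodule F A) : Prop :=
  L.IsGraded S ∧ ∀ x : Fin n → A, (∃ i, x i ∈ S) → L.bracket x ∈ S

/-- `[A,…,A,M]`: the span of all brackets with at least one entry in `M`. -/
def amul (L : NLieSuper F A n α) (M : Submodule F A) : Submodule F A :=
  Submodule.span F {z | ∃ x : Fin n → A, (∃ i, x i ∈ M) ∧ z = L.bracket x}

/-- The lower central series: `lcs 0 = A¹ = A`, `lcs s = A^{s+1} = [A,…,A,A^s]`. -/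
def lcs (L : NLieSuper F A n α) : ℕ → Submodule F A
  | 0 => ⊤
  | s + 1 => L.amul (L.lcs s)

/-- `A` is nilpotent if the lower central series reaches `0`. -/
def IsNilpotentAlg (L : NLieSuper F A n α) : Prop := ∃ v, L.lcs v = ⊥

/-- The derived subalgebra `A² = [A,…,A]`. -/
def derived (L : NLieSuper F A n α) : Submodule F A := L.lcs 1

/-- Maximal subalgebras: proper subalgebras maximal among proper subalgebras. -/
def IsMaximalSubalgebra (L : NLieSuper F A n α) (S : Submodule F A) : Prop :=
  L.IsSubalgebra S ∧ S ≠ ⊤ ∧ ∀ T, L.IsSubalgebra T → S < T → T = ⊤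

/-- The Frattini subalgebra: the intersection of all maximal subalgebras. -/
def frattini (L : NLieSuper F A n α) : Submodule F A :=
  sInf {S | L.IsMaximalSubalgebra S}

end NLieSuper

namespace NLieSuper

variable {F A : Type*} [Field F] [AddCommGroup A] [Module F A] {n : ℕ} {α : ZMod 2}

/-- `S` is an ideal in `T`: `S ⊆ T` and `[T,…,T,S] ⊆ S`. -/
def IsIdealIn (L : NLieSuper F A n α) (T S : Submodule F A) : Prop :=
  S ≤ T ∧ ∀ x : Fin n → A, (∀ i, x i ∈ T) → (∃ i, x i ∈ S) → L.bracket x ∈ S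

/-- `S` is subinvariant in `T`: there is a finite chain `T = c₀ ⊵ c₁ ⊵ … ⊵ c_r = S`
with each term an ideal in the preceding one. -/
def SubinvariantIn (L : NLieSuper F A n α) (T S : Submodule F A) : Prop :=
  ∃ (r : ℕ) (c : ℕ → Submodule F A),
    c 0 = T ∧ c r = S ∧ ∀ i < r, L.IsIdealIn (c i) (c (i + 1))

/-- `S` is a maximal subalgebra of `T`: a subalgebra strictly below `T` with no subalgebra
strictly in between. -/
def MaximalIn (L : NLieSuper F A n α) (T S : Submodule F A) : Prop :=
  L.IsSubalgebra S ∧ S < T ∧ ∀ U, L.IsSubalgebra U → S < U → U ≤ T → U = T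

/-- An upper chain of length `k` in `T`: `T = U₀ ⊃ U₁ ⊃ … ⊃ U_k`, each `U_{i+1}` maximal
in `U_i`. -/
def IsUpperChain (L : NLieSuper F A n α) (T : Submodule F A) (k : ℕ)
    (U : ℕ → Submodule F A) : Prop :=
  U 0 = T ∧ ∀ i < k, L.MaximalIn (U i) (U (i + 1))

open scoped Classical in
/-- The subinvariance number of an upper chain in `T`: the number of `U_i ≠ U_0 = T`
that are subinvariant in `T`. -/
noncomputable def sNum (L : NLieSuper F A n α) (T : Submodule F A) (k : ℕ)
    (U : ℕ → Submodule F A) : ℕ :=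
  ((Finset.Icc 1 k).filter (fun i => L.SubinvariantIn T (U i))).card

/-- The invariance number of an upper chain: `k - s` if `s ≠ 0`, and `k` otherwise. -/
noncomputable def vChain (L : NLieSuper F A n α) (T : Submodule F A) (k : ℕ)
    (U : ℕ → Submodule F A) : ℕ :=
  if L.sNum T k U = 0 then k else k - L.sNum T k U

/-- The invariance number of `T`: the maximum of invariance numbers over all upper chains
in `T`. -/
noncomputable def vNum (L : NLieSuper F A n α) (T : Submodule F A) : ℕ :=
  sSup {m | ∃ k U, L.IsUpperChain T k U ∧ m = L.vChain T k U}

end NLieSuper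

namespace NLieSuper

variable {F A : Type*} [Field F] [AddCommGroup A] [Module F A] {n : ℕ} {α : ZMod 2}

/-- The graded core of a subspace: the largest graded subspace contained in it. -/
def gcore (L : NLieSuper F A n α) (M : Submodule F A) : Submodule F A :=
  (M ⊓ L.grading 0) ⊔ (M ⊓ L.grading 1)

lemma gcore_le (L : NLieSuper F A n α) (M : Submodule F A) : L.gcore M ≤ M :=
  sup_le inf_le_left inf_le_left

lemma gcore_eq_of_graded {L : NLieSuper F A n α} {M : Submodule F A} (h : L.IsGraded M) :
    L.gcore M = M := le_antisymm (L.gcore_le M) h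

lemma gcore_top (L : NLieSuper F A n α) : L.gcore (⊤ : Submodule F A) = ⊤ := by
  have h := L.internal.submodule_iSup_eq_top
  rw [gcore, top_inf_eq, top_inf_eq]
  apply le_antisymm le_top
  rw [← h]
  apply iSup_le
  intro i
  have hi : i = 0 ∨ i = 1 := by revert i; decide
  rcases hi with rfl | rfl
  · exact le_sup_left
  · exact le_sup_right

lemma isGraded_gcore (L : NLieSuper F A n α) (M : Submodule F A) :
    L.IsGraded (L.gcore M) := by
  refine sup_le ?_ ?_
  · exact le_sup_of_le_left (le_inf le_sup_left inf_le_right)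
  · exact le_sup_of_le_right (le_inf le_sup_right inf_le_right)

lemma zmod2_cases (u : ZMod 2) : u = 0 ∨ u = 1 := by revert u; decide

lemma isIdealIn_gcore {L : NLieSuper F A n α} {T S : Submodule F A}
    (h : L.IsIdealIn T S) : L.IsIdealIn (L.gcore T) (L.gcore S) := by
  classical
  obtain ⟨hST, hbr⟩ := h
  refine ⟨sup_le_sup (inf_le_inf_right _ hST) (inf_le_inf_right _ hST), ?_⟩
  rintro x hxT ⟨i0, hx0⟩
  set P : Fin n → Submodule F A := fun i => if i = i0 then S else T with hP
  have hPle : ∀ i, P i ≤ T := by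
    intro i
    simp only [hP]
    split
    · exact hST
    · exact le_rfl
  have hdec : ∀ i, ∃ y, (y ∈ P i ⊓ L.grading 0) ∧ ∃ z, (z ∈ P i ⊓ L.grading 1) ∧ y + z = x i := by
    intro i
    by_cases hi : i = i0
    · subst hi
      simp only [hP, if_pos rfl]
      exact Submodule.mem_sup.mp hx0
    · simp only [hP, if_neg hi]
      exact Submodule.mem_sup.mp (hxT i)
  choose a ha b hb hab using hdec
  have hx : x = a + b := by
    funext i
    rw [Pi.add_apply, hab]
  rw [hx, L.bracket.map_add_univ]
  apply Submodule.sum_mem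
  intro s _
  have hmemP : ∀ i, (s.piecewise a b) i ∈ P i := by
    intro i
    by_cases hi : i ∈ s
    · rw [Finset.piecewise_eq_of_mem _ _ _ hi]; exact (ha i).1
    · rw [Finset.piecewise_eq_of_notMem _ _ _ hi]; exact (hb i).1
  have hgrade : ∀ i, (s.piecewise a b) i ∈ L.grading (if i ∈ s then 0 else 1) := by
    intro i
    by_cases hi : i ∈ s
    · rw [Finset.piecewise_eq_of_mem _ _ _ hi, if_pos hi]; exact (ha i).2
    · rw [Finset.piecewise_eq_of_notMem _ _ _ hi, if_neg hi]; exact (hb i).2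
  have h1 : L.bracket (s.piecewise a b) ∈ S := by
    refine hbr _ (fun i => hPle i (hmemP i)) ⟨i0, ?_⟩
    have := hmemP i0
    simpa only [hP, if_pos rfl] using this
  have h2 := L.bracket_grade _ (fun i => if i ∈ s then 0 else 1) hgrade
  rcases zmod2_cases (α + ∑ i, if i ∈ s then (0 : ZMod 2) else 1) with ht | ht <;> rw [ht] at h2
  · exact Submodule.mem_sup_left (Submodule.mem_inf.mpr ⟨h1, h2⟩)
  · exact Submodule.mem_sup_right (Submodule.mem_inf.mpr ⟨h1, h2⟩)

lemma antitone_of_step {r : ℕ} {c : ℕ → Submodule F A}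
    (h : ∀ i < r, c (i + 1) ≤ c i) : ∀ i j, i ≤ j → j ≤ r → c j ≤ c i := by
  intro i j
  induction j with
  | zero =>
    intro hij _
    obtain rfl := Nat.le_zero.mp hij
    exact le_rfl
  | succ j ih =>
    intro hij hjr
    rcases Nat.eq_or_lt_of_le hij with rfl | hlt
    · exact le_rfl
    · exact (h j (by omega)).trans (ih (by omega) (by omega))

lemma not_subinvariant_top {L : NLieSuper F A n α} (hn : 0 < n) {V : Submodule F A}
    (hV : L.IsMaximalSubalgebra V) (hni : ¬ L.IsIdeal V) :
    ¬ L.SubinvariantIn ⊤ V := by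
  classical
  rintro ⟨r, c, hc0, hcr, hstep⟩
  set c' : ℕ → Submodule F A := fun i => L.gcore (c i) with hc'
  have hstep' : ∀ i < r, L.IsIdealIn (c' i) (c' (i + 1)) :=
    fun i hi => isIdealIn_gcore (hstep i hi)
  have hc'0 : c' 0 = ⊤ := by show L.gcore (c 0) = ⊤; rw [hc0]; exact L.gcore_top
  have hc'r : c' r = V := by
    show L.gcore (c r) = V
    rw [hcr]; exact gcore_eq_of_graded hV.1.1
  have hrne : c' r ≠ ⊤ := hc'r ▸ hV.2.1
  have hex : ∃ j, c' j ≠ ⊤ := ⟨r, hrne⟩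
  set j := Nat.find hex with hjdef
  have hjne : c' j ≠ ⊤ := Nat.find_spec hex
  have hjr : j ≤ r := Nat.find_le hrne
  have hj0 : j ≠ 0 := fun h => hjne (h ▸ hc'0)
  have hprev : c' (j - 1) = ⊤ := by
    by_contra hne
    have hle2 : Nat.find hex ≤ j - 1 := Nat.find_le hne
    omega
  have hidl : L.IsIdealIn ⊤ (c' j) := by
    have h := hstep' (j - 1) (by omega)
    rwa [Nat.sub_add_cancel (by omega), hprev] at h
  have hle : V ≤ c' j := by
    rw [← hc'r]
    exact antitone_of_step (fun i hi => (hstep' i hi).1) j r hjr le_rfl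
  have hsub : L.IsSubalgebra (c' j) := by
    refine ⟨L.isGraded_gcore _, fun x hx => ?_⟩
    exact hidl.2 x (fun i => trivial) ⟨⟨0, hn⟩, hx _⟩
  have hcjV : c' j = V := by
    by_contra hne2
    exact hjne (hV.2.2 _ hsub (lt_of_le_of_ne hle (Ne.symm hne2)))
  subst hcjV
  exact hni ⟨hV.1.1, fun x hx => hidl.2 x (fun i => trivial) hx⟩

lemma subinvariantIn_of_top {L : NLieSuper F A n α} {V U : Submodule F A}
    (hVs : L.IsSubalgebra V) (hU : L.SubinvariantIn ⊤ U) (hUV : U ≤ V) :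
    L.SubinvariantIn V U := by
  obtain ⟨r, c, hc0, hcr, hstep⟩ := hU
  refine ⟨r, fun i => c i ⊓ V, ?_, ?_, ?_⟩
  · show c 0 ⊓ V = V
    rw [hc0, top_inf_eq]
  · show c r ⊓ V = U
    rw [hcr, inf_eq_left.mpr hUV]
  intro i hi
  refine ⟨inf_le_inf_right _ (hstep i hi).1, ?_⟩
  rintro x hx ⟨i1, hi1⟩
  refine Submodule.mem_inf.mpr ⟨?_, ?_⟩
  · exact (hstep i hi).2 x (fun i2 => (Submodule.mem_inf.mp (hx i2)).1)
      ⟨i1, (Submodule.mem_inf.mp hi1).1⟩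
  · exact hVs.2 x (fun i2 => (Submodule.mem_inf.mp (hx i2)).2)

lemma upperChain_length_le [FiniteDimensional F A] {L : NLieSuper F A n α}
    {T : Submodule F A} {k : ℕ} {U : ℕ → Submodule F A} (h : L.IsUpperChain T k U) :
    k ≤ Module.finrank F A := by
  have key : ∀ i, i ≤ k → Module.finrank F (U i) + i ≤ Module.finrank F (U 0) := by
    intro i
    induction i with
    | zero => intro _; omega
    | succ i ih =>
      intro hik
      have h1 : Module.finrank F (U (i + 1)) < Module.finrank F (U i) :=
        Submodule.finrank_lt_finrank_of_lt ((h.2 i (by omega)).2.1)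
      have := ih (by omega)
      omega
  have h2 := key k le_rfl
  have h3 : Module.finrank F (U 0) ≤ Module.finrank F A := Submodule.finrank_le _
  omega

lemma vChain_le {L : NLieSuper F A n α} {T : Submodule F A} {k : ℕ}
    {U : ℕ → Submodule F A} : L.vChain T k U ≤ k := by
  unfold vChain
  split <;> omega

lemma bddAbove_vSet [FiniteDimensional F A] (L : NLieSuper F A n α) (T : Submodule F A) :
    BddAbove {m | ∃ k U, L.IsUpperChain T k U ∧ m = L.vChain T k U} := by
  refine ⟨Module.finrank F A, ?_⟩
  rintro m ⟨k, U, hc, rfl⟩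
  exact le_trans vChain_le (upperChain_length_le hc)

lemma zero_mem_vSet (L : NLieSuper F A n α) (T : Submodule F A) :
    (0 : ℕ) ∈ {m | ∃ k U, L.IsUpperChain T k U ∧ m = L.vChain T k U} := by
  refine ⟨0, fun _ => T, ⟨rfl, fun i hi => absurd hi (by omega)⟩, ?_⟩
  simp [vChain, sNum]

end NLieSuper

/-- If `V` is a maximal subalgebra of a nonzero finite-dimensional `n`-Lie superalgebra `A`
which is not an ideal of `A`, then `v(A) > v(V)`. -/
theorem vNum_lt_of_maximal_not_ideal {F A : Type*} [Field F] [AddCommGroup A]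
    [Module F A] [FiniteDimensional F A] [Nontrivial A] {n : ℕ} (hn : 2 ≤ n) {α : ZMod 2}
    (L : NLieSuper F A n α) (V : Submodule F A) (hV : L.IsMaximalSubalgebra V)
    (hnotideal : ¬ L.IsIdeal V) : L.vNum V < L.vNum ⊤ := by
  classical
  open NLieSuper in
  have hmem : L.vNum V ∈ {m | ∃ k U, L.IsUpperChain V k U ∧ m = L.vChain V k U} :=
    Nat.sSup_mem ⟨0, L.zero_mem_vSet V⟩ (L.bddAbove_vSet V)
  obtain ⟨k, U, hchain, hval⟩ := hmem
  set U' : ℕ → Submodule F A := fun i => if i = 0 then ⊤ else U (i - 1) with hU'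
  have hUle : ∀ j, j ≤ k → U j ≤ V := by
    intro j hj
    have := NLieSuper.antitone_of_step (c := U)
      (fun i hi => (hchain.2 i hi).2.1.le) 0 j (by omega) hj
    rwa [hchain.1] at this
  have hchain' : L.IsUpperChain ⊤ (k + 1) U' := by
    constructor
    · simp [hU']
    · intro i hi
      rcases Nat.eq_zero_or_pos i with rfl | hipos
      · simp only [hU', if_pos rfl, if_neg one_ne_zero]
        rw [show (1 : ℕ) - 1 = 0 from rfl, hchain.1]
        exact ⟨hV.1, lt_top_iff_ne_top.mpr hV.2.1, fun W hW hVW _ => hV.2.2 W hW hVW⟩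
      · simp only [hU', if_neg (by omega : ¬ i = 0), if_neg (by omega : ¬ i + 1 = 0)]
        rw [show i + 1 - 1 = (i - 1) + 1 by omega]
        exact hchain.2 (i - 1) (by omega)
  have hVnotsub : ¬ L.SubinvariantIn ⊤ V :=
    NLieSuper.not_subinvariant_top (by omega) hV hnotideal
  have hsle : L.sNum ⊤ (k + 1) U' ≤ L.sNum V k U := by
    unfold NLieSuper.sNum
    apply Finset.card_le_card_of_injOn (fun i => i - 1)
    · intro i hi
      simp only [Finset.mem_coe, Finset.mem_filter, Finset.mem_Icc] at hi ⊢
      obtain ⟨⟨hi1, hi2⟩, hisub⟩ := hi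
      have hUi : U' i = U (i - 1) := by
        simp only [hU', if_neg (by omega : ¬ i = 0)]
      rw [hUi] at hisub
      have hine1 : i ≠ 1 := by
        rintro rfl
        rw [show (1 : ℕ) - 1 = 0 from rfl, hchain.1] at hisub
        exact hVnotsub hisub
      refine ⟨⟨by omega, by omega⟩, ?_⟩
      exact NLieSuper.subinvariantIn_of_top hV.1 hisub (hUle (i - 1) (by omega))
    · intro i hi j hj hij
      simp only [Finset.mem_coe, Finset.mem_filter, Finset.mem_Icc] at hi hj
      dsimp only at hij
      omega
  have hsk : L.sNum V k U ≤ k := by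
    have h1 : L.sNum V k U ≤ (Finset.Icc 1 k).card := Finset.card_filter_le _ _
    rwa [Nat.card_Icc, Nat.add_sub_cancel] at h1
  have hfin : L.vChain V k U < L.vChain ⊤ (k + 1) U' := by
    unfold NLieSuper.vChain
    split_ifs <;> omega
  calc L.vNum V = L.vChain V k U := hval
    _ < L.vChain ⊤ (k + 1) U' := hfin
    _ ≤ L.vNum ⊤ := le_csSup (L.bddAbove_vSet ⊤) ⟨k + 1, U', hchain', rfl⟩
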